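/- Let α = (α₀,...,α_K) be a finite complex sequence and λ ∈ ℂ. Define sequences a and b of length 2K+2 by a_{2p} = α_p, a_{2p+1} = λ·α_p, and b_{2p} = conj(λ)·α_p, b_{2p+1} = α_p. Then a and b are discrete ambiguity partners: |𝒜(a)(k,t)| = |𝒜(b)(k,t)| for all k ∈ ℤ, t ∈ ℝ. -/

import Mathlib

noncomputable def discAmb (a : ℤ → ℂ) (k : ℤ) (t : ℝ) : ℂ :=
  ∑ᶠ j : ℤ, a j * (starRingEnd ℂ) (a (j - k)) * Complex.exp (Complex.I * j * t)

open Function Set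

/-- Split a finsum over ℤ into even and odd parts. -/
lemma finsum_int_parity (f : ℤ → ℂ) (hf : (Function.support f).Finite) :
    ∑ᶠ j, f j = (∑ᶠ p, f (2 * p)) + ∑ᶠ p, f (2 * p + 1) := by
  have hinj1 : Function.Injective (fun p : ℤ => 2 * p) := fun x y h => by
    simp only at h; omega
  have hinj2 : Function.Injective (fun p : ℤ => 2 * p + 1) := fun x y h => by
    simp only at h; omega
  have hU : Set.range (fun p : ℤ => 2 * p) ∪ Set.range (fun p : ℤ => 2 * p + 1) = Set.univ := by
    ext j
    simp only [Set.mem_union, Set.mem_range, Set.mem_univ, iff_true]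
    rcases Int.even_or_odd j with ⟨p, hp⟩ | ⟨p, hp⟩
    · exact Or.inl ⟨p, by omega⟩
    · exact Or.inr ⟨p, by omega⟩
  have hdisj : Disjoint (Set.range (fun p : ℤ => 2 * p))
      (Set.range (fun p : ℤ => 2 * p + 1)) := by
    rw [Set.disjoint_left]
    rintro x ⟨p, rfl⟩ ⟨q, hq⟩
    simp only at hq
    omega
  calc ∑ᶠ j, f j = ∑ᶠ j ∈ Set.univ, f j := (finsum_mem_univ f).symm
    _ = ∑ᶠ j ∈ (Set.range (fun p : ℤ => 2 * p) ∪ Set.range (fun p : ℤ => 2 * p + 1)), f j := by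
        rw [hU]
    _ = (∑ᶠ j ∈ Set.range (fun p : ℤ => 2 * p), f j)
        + ∑ᶠ j ∈ Set.range (fun p : ℤ => 2 * p + 1), f j :=
        finsum_mem_union' hdisj (hf.subset Set.inter_subset_right)
          (hf.subset Set.inter_subset_right)
    _ = (∑ᶠ p, f (2 * p)) + ∑ᶠ p, f (2 * p + 1) := by
        rw [finsum_mem_range hinj1, finsum_mem_range hinj2]

lemma abs_key (c u : ℂ) (hc : (starRingEnd ℂ) c = c) (hu : ‖u‖ = 1) :
    ‖1 + c * u‖ = ‖c + u‖ := by
  have huu : u * (starRingEnd ℂ) u = 1 := by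
    rw [Complex.mul_conj, Complex.normSq_eq_norm_sq, hu]
    norm_num
  calc ‖1 + c * u‖ = ‖(starRingEnd ℂ) (1 + c * u)‖ :=
        (Complex.norm_conj _).symm
    _ = ‖1 + c * (starRingEnd ℂ) u‖ := by rw [map_add, map_mul, hc, map_one]
    _ = ‖u‖ * ‖1 + c * (starRingEnd ℂ) u‖ := by rw [hu, one_mul]
    _ = ‖u * (1 + c * (starRingEnd ℂ) u)‖ := (norm_mul _ _).symm
    _ = ‖c + u‖ := by
        congr 1
        have : u * (1 + c * (starRingEnd ℂ) u) = u + c * (u * (starRingEnd ℂ) u) := by ring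
        rw [this, huu, mul_one, add_comm]

theorem stmt15 (K : ℕ) (α : ℤ → ℂ)
    (hα : ∀ j : ℤ, α j ≠ 0 → 0 ≤ j ∧ j ≤ K)
    (lam : ℂ) (a b : ℤ → ℂ)
    (ha : ∀ p : ℤ, a (2 * p) = α p ∧ a (2 * p + 1) = lam * α p)
    (hb : ∀ p : ℤ, b (2 * p) = (starRingEnd ℂ) lam * α p ∧ b (2 * p + 1) = α p) :
    ∀ (k : ℤ) (t : ℝ), ‖discAmb a k t‖ = ‖discAmb b k t‖ := by
  have hαfin : (Function.support α).Finite := by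
    apply Set.Finite.subset (Set.finite_Icc (0 : ℤ) (K : ℤ))
    intro j hj
    exact Set.mem_Icc.2 (hα j hj)
  have hafin : (Function.support a).Finite := by
    apply Set.Finite.subset (Set.finite_Icc (0 : ℤ) (2 * (K : ℤ) + 1))
    intro j hj
    rcases Int.even_or_odd j with ⟨p, hp⟩ | ⟨p, hp⟩
    · have hj2 : j = 2 * p := by omega
      rw [Function.mem_support, hj2, (ha p).1] at hj
      have := hα p hj
      simp only [Set.mem_Icc]; omega
    · have hj2 : j = 2 * p + 1 := by omega
      rw [Function.mem_support, hj2, (ha p).2] at hj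
      have : α p ≠ 0 := fun h => hj (by rw [h, mul_zero])
      have := hα p this
      simp only [Set.mem_Icc]; omega
  have hbfin : (Function.support b).Finite := by
    apply Set.Finite.subset (Set.finite_Icc (0 : ℤ) (2 * (K : ℤ) + 1))
    intro j hj
    rcases Int.even_or_odd j with ⟨p, hp⟩ | ⟨p, hp⟩
    · have hj2 : j = 2 * p := by omega
      rw [Function.mem_support, hj2, (hb p).1] at hj
      have : α p ≠ 0 := fun h => hj (by rw [h, mul_zero])
      have := hα p this
      simp only [Set.mem_Icc]; omega
    · have hj2 : j = 2 * p + 1 := by omega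
      rw [Function.mem_support, hj2, (hb p).2] at hj
      have := hα p hj
      simp only [Set.mem_Icc]; omega
  intro k t
  rcases Int.even_or_odd k with ⟨m, hm⟩ | ⟨m, hm⟩
  · -- even case : k = 2 * m
    have hk : k = 2 * m := by omega
    subst hk
    set u : ℂ := Complex.exp (Complex.I * t) with hu_def
    set c : ℂ := lam * (starRingEnd ℂ) lam with hc_def
    set g : ℤ → ℂ := fun p =>
      α p * (starRingEnd ℂ) (α (p - m)) * Complex.exp (Complex.I * (2 * p : ℤ) * t) with hg_def
    have hgfin : (Function.support g).Finite := by
      apply hαfin.subset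
      intro p hp
      simp only [Function.mem_support, hg_def] at hp ⊢
      intro h
      apply hp
      rw [h, zero_mul, zero_mul]
    set S : ℂ := ∑ᶠ p, g p with hS_def
    have hexp_odd : ∀ p : ℤ, Complex.exp (Complex.I * (2 * p + 1 : ℤ) * t)
        = u * Complex.exp (Complex.I * (2 * p : ℤ) * t) := by
      intro p
      rw [hu_def, ← Complex.exp_add]
      congr 1
      push_cast
      ring
    have hAa : discAmb a (2 * m) t = (1 + c * u) * S := by
      rw [discAmb, finsum_int_parity _ (by
        apply hafin.subset
        intro j hj
        simp only [Function.mem_support] at hj ⊢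
        intro h; apply hj; rw [h, zero_mul, zero_mul])]
      have h1 : (∑ᶠ p : ℤ, a (2 * p) * (starRingEnd ℂ) (a (2 * p - 2 * m))
          * Complex.exp (Complex.I * (2 * p : ℤ) * t)) = S := by
        apply finsum_congr
        intro p
        have : (2 : ℤ) * p - 2 * m = 2 * (p - m) := by ring
        rw [this, (ha p).1, (ha (p - m)).1, hg_def]
      have h2 : (∑ᶠ p : ℤ, a (2 * p + 1) * (starRingEnd ℂ) (a (2 * p + 1 - 2 * m))
          * Complex.exp (Complex.I * (2 * p + 1 : ℤ) * t)) = (c * u) * S := by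
        rw [hS_def, mul_finsum _ _]
        apply finsum_congr
        intro p
        have : (2 : ℤ) * p + 1 - 2 * m = 2 * (p - m) + 1 := by ring
        rw [this, (ha p).2, (ha (p - m)).2, hexp_odd p, hg_def, hc_def]
        simp only [map_mul]
        ring
      rw [h1, h2]
      ring
    have hAb : discAmb b (2 * m) t = (c + u) * S := by
      rw [discAmb, finsum_int_parity _ (by
        apply hbfin.subset
        intro j hj
        simp only [Function.mem_support] at hj ⊢
        intro h; apply hj; rw [h, zero_mul, zero_mul])]
      have h1 : (∑ᶠ p : ℤ, b (2 * p) * (starRingEnd ℂ) (b (2 * p - 2 * m))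
          * Complex.exp (Complex.I * (2 * p : ℤ) * t)) = c * S := by
        rw [hS_def, mul_finsum _ _]
        apply finsum_congr
        intro p
        have : (2 : ℤ) * p - 2 * m = 2 * (p - m) := by ring
        rw [this, (hb p).1, (hb (p - m)).1, hg_def, hc_def]
        simp only [map_mul, Complex.conj_conj]
        ring
      have h2 : (∑ᶠ p : ℤ, b (2 * p + 1) * (starRingEnd ℂ) (b (2 * p + 1 - 2 * m))
          * Complex.exp (Complex.I * (2 * p + 1 : ℤ) * t)) = u * S := by
        rw [hS_def, mul_finsum _ _]
        apply finsum_congr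
        intro p
        have : (2 : ℤ) * p + 1 - 2 * m = 2 * (p - m) + 1 := by ring
        rw [this, (hb p).2, (hb (p - m)).2, hexp_odd p, hg_def]
        ring
      rw [h1, h2]
      ring
    rw [hAa, hAb, norm_mul, norm_mul]
    congr 1
    apply abs_key
    · rw [hc_def, map_mul, Complex.conj_conj]; ring
    · rw [hu_def, Complex.norm_exp]
      simp
  · -- odd case : k = 2 * m + 1, the two ambiguity functions are equal
    have heq : discAmb a k t = discAmb b k t := by
      rw [discAmb, discAmb]
      apply finsum_congr
      intro j
      congr 1
      rcases Int.even_or_odd j with ⟨p, hp⟩ | ⟨p, hp⟩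
      · have hj2 : j = 2 * p := by omega
        have hjk : 2 * p - k = 2 * (p - m - 1) + 1 := by omega
        rw [hj2, hjk, (ha p).1, (ha (p - m - 1)).2, (hb p).1, (hb (p - m - 1)).2]
        simp only [map_mul]
        ring
      · have hj2 : j = 2 * p + 1 := by omega
        have hjk : 2 * p + 1 - k = 2 * (p - m) := by omega
        rw [hj2, hjk, (ha p).2, (ha (p - m)).1, (hb p).2, (hb (p - m)).1]
        simp only [map_mul, Complex.conj_conj]
        ring
    rw [heq]
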